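/- For α > 0, the operator Λ_α defined by (Λ_α p)(x) = x p'(x) + (α − x) p(x) is real zero increasing: for every real polynomial p, the number of real zeros (with multiplicity) of Λ_α p is strictly greater than the number of real zeros of p. -/

import Mathlib

open Polynomial Finset Filter Set Topology

namespace Stmt4

noncomputable def L (α : ℝ) (p : ℝ[X]) : ℝ[X] := X * derivative p + (C α - X) * p

lemma L_ne_zero {α : ℝ} {p : ℝ[X]} (hp : p ≠ 0) : L α p ≠ 0 := by
  intro h
  have hc : (L α p).coeff (p.natDegree + 1) = -p.leadingCoeff := by
    rw [L, coeff_add, coeff_X_mul, coeff_derivative, sub_mul, coeff_sub, coeff_C_mul,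
      coeff_X_mul, p.coeff_natDegree_succ_eq_zero, leadingCoeff]
    ring
  rw [h, coeff_zero] at hc
  exact hp (leadingCoeff_eq_zero.mp (by linarith [hc]))

lemma mult_le {α : ℝ} {p : ℝ[X]} (hp : p ≠ 0) (x : ℝ) :
    p.rootMultiplicity x ≤ (L α p).rootMultiplicity x + 1 := by
  rcases Nat.eq_zero_or_pos (p.rootMultiplicity x) with h0 | hpos
  · omega
  have key : p.rootMultiplicity x - 1 ≤ (L α p).rootMultiplicity x := by
    rw [le_rootMultiplicity_iff (L_ne_zero hp)]
    refine dvd_add (Dvd.dvd.mul_left ?_ X) (Dvd.dvd.mul_left ?_ _)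
    · exact dvd_trans (pow_dvd_pow _ (p.rootMultiplicity_sub_one_le_derivative_rootMultiplicity x))
        (pow_rootMultiplicity_dvd _ x)
    · exact dvd_trans (pow_dvd_pow _ (Nat.sub_le _ 1)) (pow_rootMultiplicity_dvd p x)
  omega

lemma mult_zero_le {α : ℝ} {p : ℝ[X]} (hp : p ≠ 0) :
    p.rootMultiplicity 0 ≤ (L α p).rootMultiplicity 0 := by
  rw [le_rootMultiplicity_iff (L_ne_zero hp)]
  rcases Nat.eq_zero_or_pos (p.rootMultiplicity 0) with h0 | hpos
  · simp [h0]
  obtain ⟨k, hk⟩ : ∃ k, p.rootMultiplicity 0 = k + 1 := ⟨_, (Nat.succ_pred_eq_of_pos hpos).symm⟩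
  refine dvd_add ?_ (Dvd.dvd.mul_left (pow_rootMultiplicity_dvd p 0) _)
  have h1 : (X - C (0:ℝ)) ^ k ∣ derivative p := by
    have := p.rootMultiplicity_sub_one_le_derivative_rootMultiplicity 0
    exact dvd_trans (pow_dvd_pow _ (by omega)) (pow_rootMultiplicity_dvd _ 0)
  rw [hk, pow_succ']
  have hX : X - C (0:ℝ) = X := by simp
  rw [hX]
  exact mul_dvd_mul_left X (by rwa [hX] at h1)

lemma sum_count_le (s : Multiset ℝ) (A : Finset ℝ) : ∑ x ∈ A, s.count x ≤ Multiset.card s := by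
  classical
  calc ∑ x ∈ A, s.count x = ∑ x ∈ A ∩ s.toFinset, s.count x := by
        refine (Finset.sum_subset Finset.inter_subset_left fun x hx hnx => ?_).symm
        rw [Multiset.count_eq_zero]
        intro hmem
        exact hnx (Finset.mem_inter.mpr ⟨hx, Multiset.mem_toFinset.mpr hmem⟩)
    _ ≤ ∑ x ∈ s.toFinset, s.count x :=
        Finset.sum_le_sum_of_subset Finset.inter_subset_right
    _ = Multiset.card s := s.toFinset_sum_count_eq

lemma evalL (α : ℝ) (p : ℝ[X]) (x : ℝ) :
    (L α p).eval x = x * (derivative p).eval x + (α - x) * p.eval x := by simp [L]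

lemma hasDerivAt_hp (α : ℝ) (p : ℝ[X]) {x : ℝ} (hx : 0 < x) :
    HasDerivAt (fun y : ℝ => y ^ α * Real.exp (-y) * p.eval y)
      (x ^ (α - 1) * Real.exp (-x) * (L α p).eval x) x := by
  have h1 : HasDerivAt (fun y : ℝ => y ^ α) (α * x ^ (α - 1)) x :=
    Real.hasDerivAt_rpow_const (Or.inl hx.ne')
  have h2 : HasDerivAt (fun y : ℝ => Real.exp (-y)) (-Real.exp (-x)) x := by
    simpa using (hasDerivAt_neg x).exp
  have h3 := p.hasDerivAt x
  have h := (h1.mul h2).mul h3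
  refine h.congr_deriv ?_
  have hxα : x ^ α = x ^ (α - 1) * x := by
    rw [← Real.rpow_add_one hx.ne' (α - 1), sub_add_cancel]
  simp only [Pi.mul_apply]
  rw [evalL, hxα]; ring

lemma hasDerivAt_hm (α : ℝ) (p : ℝ[X]) {x : ℝ} (hx : x < 0) :
    HasDerivAt (fun y : ℝ => (-y) ^ α * Real.exp (-y) * p.eval y)
      ((-x) ^ (α - 1) * Real.exp (-x) * (-(L α p).eval x)) x := by
  have hx' : (-x) ≠ 0 := neg_ne_zero.2 hx.ne
  have h1 : HasDerivAt (fun y : ℝ => (-y) ^ α) (α * (-x) ^ (α - 1) * (-1)) x := by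
    have := (Real.hasDerivAt_rpow_const (x := -x) (p := α) (Or.inl hx')).comp x (hasDerivAt_neg x)
    convert (hasDerivAt_neg x).rpow_const (p := α) (Or.inl hx') using 1; ring
  have h2 : HasDerivAt (fun y : ℝ => Real.exp (-y)) (-Real.exp (-x)) x := by
    simpa using (hasDerivAt_neg x).exp
  have h3 := p.hasDerivAt x
  have h := (h1.mul h2).mul h3
  refine h.congr_deriv ?_
  have hxα : (-x) ^ α = (-x) ^ (α - 1) * (-x) := by
    rw [← Real.rpow_add_one hx' (α - 1), sub_add_cancel]
  simp only [Pi.mul_apply]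
  rw [evalL, hxα]; ring

lemma contp (α : ℝ) (hα : 0 < α) (p : ℝ[X]) (y : ℝ) :
    ContinuousAt (fun x : ℝ => x ^ α * Real.exp (-x) * p.eval x) y := by
  exact ((Real.continuousAt_rpow_const y α (Or.inr hα.le)).mul
    ((Real.continuous_exp.comp continuous_neg).continuousAt)).mul p.continuousAt

lemma contm (α : ℝ) (hα : 0 < α) (p : ℝ[X]) (y : ℝ) :
    ContinuousAt (fun x : ℝ => (-x) ^ α * Real.exp (-x) * p.eval x) y := by
  exact (((Real.continuousAt_rpow_const (-y) α (Or.inr hα.le)).comp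
    (continuous_neg.continuousAt)).mul
    ((Real.continuous_exp.comp continuous_neg).continuousAt)).mul p.continuousAt

lemma root_between {α : ℝ} (hα : 0 < α) {p : ℝ[X]} {a b : ℝ} (ha : 0 ≤ a) (hab : a < b)
    (hpa : a = 0 ∨ p.eval a = 0) (hpb : p.eval b = 0) :
    ∃ c ∈ Ioo a b, (L α p).eval c = 0 := by
  set f : ℝ → ℝ := fun x => x ^ α * Real.exp (-x) * p.eval x with hf
  have hfa : f a = 0 := by
    rcases hpa with h | h
    · simp [hf, h, Real.zero_rpow hα.ne']
    · simp [hf, h]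
  have hfb : f b = 0 := by simp [hf, hpb]
  obtain ⟨c, hc, hc0⟩ := exists_hasDerivAt_eq_zero' (l := 0)
    (f' := fun x => x ^ (α - 1) * Real.exp (-x) * (L α p).eval x) hab
    (hfa ▸ (contp α hα p a).continuousWithinAt.tendsto)
    (hfb ▸ (contp α hα p b).continuousWithinAt.tendsto)
    (fun x hx => hasDerivAt_hp α p (lt_of_le_of_lt ha hx.1))
  have hcpos : 0 < c := lt_of_le_of_lt ha hc.1
  refine ⟨c, hc, ?_⟩
  have h1 : c ^ (α - 1) ≠ 0 := (Real.rpow_pos_of_pos hcpos _).ne'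
  have h2 : Real.exp (-c) ≠ 0 := (Real.exp_pos _).ne'
  rcases mul_eq_zero.1 hc0 with h | h
  · rcases mul_eq_zero.1 h with h | h
    · exact absurd h h1
    · exact absurd h h2
  · exact h

lemma root_between_neg {α : ℝ} (hα : 0 < α) {p : ℝ[X]} {a b : ℝ} (hb : b ≤ 0) (hab : a < b)
    (hpa : p.eval a = 0) (hpb : b = 0 ∨ p.eval b = 0) :
    ∃ c ∈ Ioo a b, (L α p).eval c = 0 := by
  set f : ℝ → ℝ := fun x => (-x) ^ α * Real.exp (-x) * p.eval x with hf
  have hfa : f a = 0 := by simp [hf, hpa]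
  have hfb : f b = 0 := by
    rcases hpb with h | h
    · simp [hf, h, Real.zero_rpow hα.ne']
    · simp [hf, h]
  obtain ⟨c, hc, hc0⟩ := exists_hasDerivAt_eq_zero' (l := 0)
    (f' := fun x => (-x) ^ (α - 1) * Real.exp (-x) * (-(L α p).eval x)) hab
    (hfa ▸ (contm α hα p a).continuousWithinAt.tendsto)
    (hfb ▸ (contm α hα p b).continuousWithinAt.tendsto)
    (fun x hx => hasDerivAt_hm α p (lt_of_lt_of_le hx.2 hb))
  have hcneg : 0 < -c := by have := lt_of_lt_of_le hc.2 hb; linarith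
  refine ⟨c, hc, ?_⟩
  have h1 : (-c) ^ (α - 1) ≠ 0 := (Real.rpow_pos_of_pos hcneg _).ne'
  have h2 : Real.exp (-c) ≠ 0 := (Real.exp_pos _).ne'
  rcases mul_eq_zero.1 hc0 with h | h
  · rcases mul_eq_zero.1 h with h | h
    · exact absurd h h1
    · exact absurd h h2
  · linarith [neg_eq_zero.1 h]

lemma tendsto_top (α : ℝ) (p : ℝ[X]) :
    Tendsto (fun x : ℝ => x ^ α * Real.exp (-x) * p.eval x) atTop (𝓝 0) := by
  induction p using Polynomial.induction_on' with
  | add p q hp hq =>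
      have := hp.add hq
      rw [add_zero] at this
      refine this.congr ?_
      intro x; simp [mul_add]
  | monomial n a =>
      have h := (tendsto_rpow_mul_exp_neg_mul_atTop_nhds_zero (α + n) 1 one_pos).const_mul a
      rw [mul_zero] at h
      refine h.congr' ?_
      filter_upwards [eventually_gt_atTop (0 : ℝ)] with x hx
      rw [eval_monomial, Real.rpow_add hx, Real.rpow_natCast]
      ring_nf

lemma exists_deriv_zero_atTop_pos {f f' : ℝ → ℝ} {a b : ℝ} (hcont : ∀ x, ContinuousAt f x)
    (hfa : f a = 0) (hab : a < b) (hfb : 0 < f b)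
    (hlim : Tendsto f atTop (𝓝 0)) (hd : ∀ x, a < x → HasDerivAt f (f' x) x) :
    ∃ c, a < c ∧ f' c = 0 := by
  obtain ⟨B, hB⟩ := eventually_atTop.1 (hlim.eventually_lt_const hfb)
  set M := max B b + 1 with hM
  have hbM : b < M := lt_of_le_of_lt (le_max_right _ _) (lt_add_one _)
  have haM : a < M := hab.trans hbM
  have hfM : f M < f b := hB M (le_trans (le_max_left _ _) (by linarith [lt_add_one (max B b)]))
  obtain ⟨c, hcmem, hcmax⟩ := (isCompact_Icc (a := a) (b := M)).exists_isMaxOn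
    (Set.nonempty_Icc.2 haM.le)
    (Continuous.continuousOn (continuous_iff_continuousAt.2 hcont))
  have hcb : f b ≤ f c := hcmax ⟨hab.le, hbM.le⟩
  have hca : a < c := by
    rcases eq_or_lt_of_le hcmem.1 with h | h
    · exfalso; rw [← h, hfa] at hcb; linarith
    · exact h
  have hcM : c < M := by
    rcases lt_or_eq_of_le hcmem.2 with h | h
    · exact h
    · exfalso; rw [h] at hcb; linarith
  exact ⟨c, hca, (hcmax.isLocalMax (Icc_mem_nhds hca hcM)).hasDerivAt_eq_zero (hd c hca)⟩

lemma exists_deriv_zero_atTop {f f' : ℝ → ℝ} {a : ℝ} (hcont : ∀ x, ContinuousAt f x)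
    (hfa : f a = 0) (hlim : Tendsto f atTop (𝓝 0)) (hd : ∀ x, a < x → HasDerivAt f (f' x) x) :
    ∃ c, a < c ∧ f' c = 0 := by
  by_cases hz : ∀ x, a < x → f x = 0
  · refine ⟨a + 1, by linarith, ?_⟩
    have heq : f =ᶠ[𝓝 (a + 1)] fun _ => (0 : ℝ) := by
      filter_upwards [Ioi_mem_nhds (show a < a + 1 by linarith)] with x hx
      exact hz x hx
    have h0 : HasDerivAt f 0 (a + 1) :=
      (hasDerivAt_const (a + 1) (0 : ℝ)).congr_of_eventuallyEq heq
    exact (hd _ (by linarith)).unique h0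
  · push_neg at hz
    obtain ⟨b, hab, hfb⟩ := hz
    rcases hfb.lt_or_gt with hneg | hpos
    · obtain ⟨c, hc, h0⟩ := exists_deriv_zero_atTop_pos (f := fun x => -f x)
        (f' := fun x => -f' x) (fun x => (hcont x).neg) (by simp [hfa]) hab
        (by simpa using hneg) (by simpa using hlim.neg) (fun x hx => (hd x hx).neg)
      exact ⟨c, hc, by simpa using h0⟩
    · exact exists_deriv_zero_atTop_pos hcont hfa hab hpos hlim hd

lemma root_above {α : ℝ} (hα : 0 < α) {p : ℝ[X]} {a : ℝ} (ha : 0 ≤ a)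
    (hpa : a = 0 ∨ p.eval a = 0) : ∃ c, a < c ∧ (L α p).eval c = 0 := by
  have hfa : a ^ α * Real.exp (-a) * p.eval a = 0 := by
    rcases hpa with h | h
    · simp [h, Real.zero_rpow hα.ne']
    · simp [h]
  obtain ⟨c, hc, hc0⟩ := exists_deriv_zero_atTop
    (f := fun x : ℝ => x ^ α * Real.exp (-x) * p.eval x)
    (f' := fun x => x ^ (α - 1) * Real.exp (-x) * (L α p).eval x)
    (contp α hα p) hfa (tendsto_top α p)
    (fun x hx => hasDerivAt_hp α p (lt_of_le_of_lt ha hx))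
  have hcpos : 0 < c := lt_of_le_of_lt ha hc
  refine ⟨c, hc, ?_⟩
  have h1 : c ^ (α - 1) ≠ 0 := (Real.rpow_pos_of_pos hcpos _).ne'
  have h2 : Real.exp (-c) ≠ 0 := (Real.exp_pos _).ne'
  rcases mul_eq_zero.1 hc0 with h | h
  · rcases mul_eq_zero.1 h with h | h
    · exact absurd h h1
    · exact absurd h h2
  · exact h

end Stmt4

/-- For `α > 0`, the operator `Λ_α p = x p' + (α - x) p` is real zero increasing:
the number of real zeros (with multiplicity) of `Λ_α p` is strictly greater than
the number of real zeros of `p`. -/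
theorem stmt_4 (α : ℝ) (hα : 0 < α) (p : Polynomial ℝ) (hp : p ≠ 0) :
    p.roots.card <
      (Polynomial.X * Polynomial.derivative p + (Polynomial.C α - Polynomial.X) * p).roots.card := by
  classical
  show p.roots.card < (Stmt4.L α p).roots.card
  set q : ℝ[X] := Stmt4.L α p with hqdef
  have hq0 : q ≠ 0 := Stmt4.L_ne_zero hp
  set F : Finset ℝ := p.roots.toFinset with hF
  set s : Finset ℝ := insert 0 F with hs
  set t : Finset ℝ := q.roots.toFinset with ht
  have hsne : s.Nonempty := ⟨0, Finset.mem_insert_self _ _⟩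
  set m := s.max' hsne with hm
  have hm0 : (0:ℝ) ≤ m := Finset.le_max' s 0 (Finset.mem_insert_self _ _)
  have hroot_s : ∀ x ∈ s, x = 0 ∨ p.eval x = 0 := by
    intro x hx
    rcases Finset.mem_insert.1 hx with h | h
    · exact Or.inl h
    · exact Or.inr ((mem_roots hp).1 (Multiset.mem_toFinset.1 h))
  -- a root of q above all of s
  obtain ⟨c, hcm, hc0⟩ : ∃ c, m < c ∧ q.eval c = 0 :=
    Stmt4.root_above hα hm0 (hroot_s m (s.max'_mem hsne))
  -- interleaving
  have hinter : s.card ≤ ((t.filter (· < c)) \ s).card + 1 := by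
    refine Finset.card_le_diff_of_interleaved ?_
    intro x hx y hy hxy hmid
    have h0notIoo : (0:ℝ) ∉ Set.Ioo x y := hmid 0 (Finset.mem_insert_self _ _)
    have hz : ∃ z ∈ Set.Ioo x y, q.eval z = 0 := by
      rcases le_or_gt 0 x with hx0 | hx0
      · refine Stmt4.root_between hα hx0 hxy (hroot_s x hx) ?_
        rcases hroot_s y hy with h | h
        · exact absurd h (by intro h'; rw [h'] at hxy; exact absurd hxy (not_lt.2 hx0))
        · exact h
      · rcases le_or_gt y 0 with hy0 | hy0
        · refine Stmt4.root_between_neg hα hy0 hxy ?_ ?_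
          · rcases hroot_s x hx with h | h
            · exact absurd h (by intro h'; rw [h'] at hx0; exact lt_irrefl _ hx0)
            · exact h
          · exact hroot_s y hy
        · exact absurd ⟨hx0, hy0⟩ h0notIoo
    obtain ⟨z, hzIoo, hz0⟩ := hz
    refine ⟨z, ?_, hzIoo.1, hzIoo.2⟩
    refine Finset.mem_filter.2 ⟨Multiset.mem_toFinset.2 ((mem_roots hq0).2 hz0), ?_⟩
    exact lt_trans (lt_of_lt_of_le hzIoo.2 (Finset.le_max' s y hy)) hcm
  have hct : c ∈ t \ s := by
    refine Finset.mem_sdiff.2 ⟨Multiset.mem_toFinset.2 ((mem_roots hq0).2 hc0), ?_⟩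
    intro hcs
    exact absurd hcm (not_lt.2 (Finset.le_max' s c hcs))
  have hcardts : s.card ≤ (t \ s).card := by
    have hcnot : c ∉ (t.filter (· < c)) \ s := by
      intro h
      have := (Finset.mem_filter.1 (Finset.mem_sdiff.1 h).1).2
      exact lt_irrefl c this
    have hsub : insert c ((t.filter (· < c)) \ s) ⊆ t \ s := by
      intro z hz
      rcases Finset.mem_insert.1 hz with h | h
      · rwa [h]
      · rcases Finset.mem_sdiff.1 h with ⟨h1, h2⟩
        exact Finset.mem_sdiff.2 ⟨(Finset.mem_filter.1 h1).1, h2⟩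
    calc s.card ≤ ((t.filter (· < c)) \ s).card + 1 := hinter
      _ = (insert c ((t.filter (· < c)) \ s)).card := (Finset.card_insert_of_notMem hcnot).symm
      _ ≤ (t \ s).card := Finset.card_le_card hsub
  -- counting with multiplicities
  have hdisj : Disjoint F (t \ s) := by
    have h1 : Disjoint (t \ s) s := Finset.sdiff_disjoint
    exact (h1.mono_right (Finset.subset_insert 0 F)).symm
  have hsum : ∑ x ∈ F ∪ (t \ s), q.roots.count x ≤ q.roots.card :=
    Stmt4.sum_count_le _ _
  rw [Finset.sum_union hdisj] at hsum
  have h2 : (t \ s).card ≤ ∑ x ∈ t \ s, q.roots.count x := by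
    rw [Finset.card_eq_sum_ones]
    refine Finset.sum_le_sum fun x hx => ?_
    exact Nat.succ_le_iff.2 (Multiset.count_pos.2
      (Multiset.mem_toFinset.1 (Finset.mem_sdiff.1 hx).1))
  set e : ℝ → ℕ := fun x => if x = 0 then 0 else 1 with he
  have hse : (∑ x ∈ F, e x) + 1 = s.card := by
    have h1 : ∑ x ∈ F, e x = (F.erase 0).card := by
      rw [← Finset.filter_ne' F 0]
      rw [show ∀ S : Finset ℝ, (S.filter (· ≠ 0)).card = ∑ x ∈ S, if x ≠ 0 then 1 else 0 from
        fun S => by rw [Finset.sum_boole]; simp]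
      refine Finset.sum_congr rfl fun x _ => ?_
      by_cases hx : x = 0 <;> simp [he, hx]
    have h2' : s = insert 0 (F.erase 0) := by
      ext a
      simp only [hs, Finset.mem_insert, Finset.mem_erase]
      constructor
      · rintro (h | h)
        · exact Or.inl h
        · by_cases ha : a = 0
          · exact Or.inl ha
          · exact Or.inr ⟨ha, h⟩
      · rintro (h | ⟨_, h⟩)
        · exact Or.inl h
        · exact Or.inr h
    rw [h1, h2', Finset.card_insert_of_notMem (Finset.notMem_erase 0 _)]
  have h3 : ∑ x ∈ F, p.roots.count x ≤ (∑ x ∈ F, q.roots.count x) + (∑ x ∈ F, e x) := by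
    rw [← Finset.sum_add_distrib]
    refine Finset.sum_le_sum fun x _ => ?_
    rw [count_roots, count_roots]
    by_cases hx : x = 0
    · simp only [he, hx, if_pos rfl, add_zero]
      exact Stmt4.mult_zero_le hp
    · simp only [he, if_neg hx]
      exact Stmt4.mult_le hp x
  have hN : p.roots.card = ∑ x ∈ F, p.roots.count x := (p.roots.toFinset_sum_count_eq).symm
  calc p.roots.card = ∑ x ∈ F, p.roots.count x := hN
    _ ≤ (∑ x ∈ F, q.roots.count x) + (∑ x ∈ F, e x) := h3
    _ < (∑ x ∈ F, q.roots.count x) + ((∑ x ∈ F, e x) + 1) := by omega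
    _ = (∑ x ∈ F, q.roots.count x) + s.card := by rw [hse]
    _ ≤ (∑ x ∈ F, q.roots.count x) + (t \ s).card := Nat.add_le_add_left hcardts _
    _ ≤ (∑ x ∈ F, q.roots.count x) + ∑ x ∈ t \ s, q.roots.count x := Nat.add_le_add_left h2 _
    _ ≤ q.roots.card := hsum
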